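/- Let C : ℝ^n → ℝ^q and A : ℝ^n → ℝ^n be linear maps, let B = ker C, and let P_0, …, P_r : ℝ^m → ℝ^n be linear maps satisfying: C ∘ (A ∘ P_0) = 0; C ∘ (P_{i−1} − A ∘ P_i) = 0 for every 1 ≤ i ≤ r; and C ∘ P_r = 0. If the ranges of P_0, …, P_r together span ℝ^n, then the Kalman-type condition B + A(B) + A²(B) + ⋯ + A^r(B) = ℝ^n holds. -/

import Mathlib

lemma map_sum_aux {V : Type*} [AddCommGroup V] [Module ℝ V] (A : V →ₗ[ℝ] V)
    (s : Finset ℕ) (f : ℕ → Submodule ℝ V) :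
    Submodule.map A (∑ j ∈ s, f j) = ∑ j ∈ s, Submodule.map A (f j) := by
  classical
  induction s using Finset.induction with
  | empty => simp
  | insert _ _ h ih =>
    rw [Finset.sum_insert h, Finset.sum_insert h, ← ih, Submodule.add_eq_sup,
      Submodule.add_eq_sup, Submodule.map_sup]

lemma sum_le_aux {V : Type*} [AddCommGroup V] [Module ℝ V] {ι : Type*}
    {s : Finset ι} {f : ι → Submodule ℝ V} {T : Submodule ℝ V}
    (h : ∀ i ∈ s, f i ≤ T) : ∑ i ∈ s, f i ≤ T := by
  classical
  induction s using Finset.induction with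
  | empty => simp
  | insert _ _ hns ih =>
    rw [Finset.sum_insert hns, Submodule.add_eq_sup]
    exact sup_le (h _ (Finset.mem_insert_self _ _))
      (ih fun i hi => h i (Finset.mem_insert_of_mem hi))

/-- If `B = ker C`, the linear maps `P_0,…,P_r` satisfy `C ∘ A ∘ P_0 = 0`,
`C ∘ (P_{i-1} - A ∘ P_i) = 0` for `1 ≤ i ≤ r`, `C ∘ P_r = 0`, and the ranges of the
`P_i` together span `ℝ^n`, then the Kalman-type condition
`B + A(B) + ⋯ + A^r(B) = ℝ^n` holds. -/
theorem stmt_13 (n m q r : ℕ) (hn : 0 < n) (hm : 0 < m) (hq : 0 < q)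
    (C : (Fin n → ℝ) →ₗ[ℝ] (Fin q → ℝ)) (A : (Fin n → ℝ) →ₗ[ℝ] (Fin n → ℝ))
    (P : Fin (r+1) → ((Fin m → ℝ) →ₗ[ℝ] (Fin n → ℝ)))
    (h0 : C ∘ₗ (A ∘ₗ P 0) = 0)
    (hstep : ∀ (i : ℕ) (h1 : 1 ≤ i) (h2 : i ≤ r),
      C ∘ₗ (P ⟨i - 1, by omega⟩ - A ∘ₗ P ⟨i, by omega⟩) = 0)
    (hlast : C ∘ₗ P (Fin.last r) = 0)
    (hspan : ∑ i : Fin (r+1), LinearMap.range (P i) = ⊤) :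
    ∑ j ∈ Finset.range (r + 1), Submodule.map (A ^ j) (LinearMap.ker C) = ⊤ := by
  set B := LinearMap.ker C with hB
  -- the kernel term sits inside any such partial sum
  have hBle : ∀ k : ℕ, B ≤ ∑ j ∈ Finset.range (k+1), Submodule.map (A ^ j) B := by
    intro k
    have h0mem : Submodule.map (A ^ 0) B ≤ ∑ j ∈ Finset.range (k+1), Submodule.map (A ^ j) B :=
      Finset.single_le_sum (f := fun j => Submodule.map (A ^ j) B)
        (fun _ _ => bot_le) (Finset.mem_range.mpr (Nat.succ_pos k))
    intro x hx
    exact h0mem ⟨x, hx, by simp⟩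
  have key : ∀ k : ℕ, k ≤ r → LinearMap.range (P ⟨r - k, by omega⟩) ≤
      ∑ j ∈ Finset.range (k+1), Submodule.map (A ^ j) B := by
    intro k
    induction k with
    | zero =>
      intro _
      have hP : P ⟨r - 0, by omega⟩ = P (Fin.last r) := rfl
      rw [hP]
      rintro x ⟨y, rfl⟩
      refine hBle 0 ?_
      have := congrFun (congrArg DFunLike.coe hlast) y
      simpa [hB, LinearMap.mem_ker] using this
    | succ k ih =>
      intro hk1
      have hk : k ≤ r := by omega
      have hIH := ih hk
      have hst := hstep (r - k) (by omega) (by omega)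
      rintro x ⟨y, rfl⟩
      have heq : (⟨r - k - 1, by omega⟩ : Fin (r+1)) = ⟨r - (k+1), by omega⟩ := rfl
      have hker : P ⟨r - (k+1), by omega⟩ y - A (P ⟨r - k, by omega⟩ y) ∈ B := by
        have := congrFun (congrArg DFunLike.coe hst) y
        rw [heq] at this
        simpa [hB, LinearMap.mem_ker] using this
      have hmem2 : A (P ⟨r - k, by omega⟩ y) ∈
          ∑ j ∈ Finset.range (k+2), Submodule.map (A ^ j) B := by
        have h1 : A (P ⟨r - k, by omega⟩ y) ∈
            Submodule.map A (∑ j ∈ Finset.range (k+1), Submodule.map (A ^ j) B) :=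
          ⟨_, hIH ⟨y, rfl⟩, rfl⟩
        rw [map_sum_aux] at h1
        have hle : ∑ j ∈ Finset.range (k+1), Submodule.map A (Submodule.map (A ^ j) B) ≤
            ∑ j ∈ Finset.range (k+2), Submodule.map (A ^ j) B := by
          have : ∀ j, Submodule.map A (Submodule.map (A ^ j) B)
              = Submodule.map (A ^ (j+1)) B := by
            intro j
            rw [← Submodule.map_comp, ← Module.End.mul_eq_comp, ← pow_succ']
          calc ∑ j ∈ Finset.range (k+1), Submodule.map A (Submodule.map (A ^ j) B)
              = ∑ j ∈ Finset.range (k+1), Submodule.map (A ^ (j+1)) B := by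
                exact Finset.sum_congr rfl (fun j _ => this j)
            _ ≤ ∑ j ∈ Finset.range (k+2), Submodule.map (A ^ j) B := by
                rw [Finset.sum_range_succ' (fun j => Submodule.map (A ^ j) B) (k+1)]
                exact le_add_of_nonneg_right bot_le
        exact hle h1
      have : P ⟨r - (k+1), by omega⟩ y
          = (P ⟨r - (k+1), by omega⟩ y - A (P ⟨r - k, by omega⟩ y))
            + A (P ⟨r - k, by omega⟩ y) := by abel
      rw [this]
      exact Submodule.add_mem _ (hBle (k+1) hker) hmem2
  -- conclude
  rw [eq_top_iff, ← hspan]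
  apply sum_le_aux
  intro i _
  have hi : i = ⟨r - (r - i.1), by omega⟩ := Fin.ext (by simp; omega)
  rw [hi]
  refine le_trans (key (r - i.1) (by omega)) ?_
  exact Finset.sum_le_sum_of_subset (Finset.range_subset_range.mpr (by omega))
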